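/- For every probability density η on [-R,R] (i.e. η ≥ 0 with ∫_{-R}^R η = 1) that is bounded above by M > 0, the variance satisfies Var_η(t) := ∫_{-R}^R (t - t̄)² η(t) dt ≥ 1/(12 M²), where t̄ = ∫_{-R}^R t η(t) dt. -/
import Mathlib


open MeasureTheory intervalIntegral
set_option maxHeartbeats 1000000 in

/-- Bathtub-principle variance lower bound: a probability density on `[-R, R]`
bounded by `M` has variance at least `1/(12 M²)`. -/
theorem variance_lower_bound (R M : ℝ) (hR : 0 < R) (hM : 0 < M)
    (η : ℝ → ℝ)
    (hmeas : Measurable η)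
    (hnn : ∀ t ∈ Set.Icc (-R) R, 0 ≤ η t)
    (hub : ∀ t ∈ Set.Icc (-R) R, η t ≤ M)
    (hint : IntervalIntegrable η volume (-R) R)
    (hprob : (∫ t in (-R)..R, η t) = 1) :
    1 / (12 * M ^ 2) ≤
      ∫ t in (-R)..R, (t - ∫ s in (-R)..R, s * η s) ^ 2 * η t := by
  set b : ℝ := ∫ s in (-R)..R, s * η s with hb
  set c : ℝ := 1 / (2 * M) with hc
  have hc0 : 0 < c := by positivity
  have hRR : -R ≤ R := by linarith
  clear_value b c
  set g : ℝ → ℝ := fun t => max (c ^ 2 - (t - b) ^ 2) 0 with hg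
  have hgcont : Continuous g := by
    exact (continuous_const.sub ((continuous_id.sub continuous_const).pow 2)).max
      continuous_const
  -- g vanishes outside [b-c, b+c]
  have hgzero : ∀ t, t ∉ Set.Icc (b - c) (b + c) → g t = 0 := by
    intro t ht
    simp only [Set.mem_Icc, not_and_or, not_le] at ht
    have : c ^ 2 - (t - b) ^ 2 ≤ 0 := by
      rcases ht with h | h <;> nlinarith
    simp [hg, max_eq_right this]
  have hgsupp : HasCompactSupport g :=
    HasCompactSupport.intro isCompact_Icc hgzero
  have hgInt : Integrable g volume :=
    hgcont.integrable_of_hasCompactSupport hgsupp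
  have hgnn : ∀ t, 0 ≤ g t := fun t => le_max_right _ _
  -- total integral of g is 4c³/3
  have hgtotal : (∫ t, g t) = 4 * c ^ 3 / 3 := by
    rw [← setIntegral_eq_integral_of_forall_compl_eq_zero hgzero]
    rw [integral_Icc_eq_integral_Ioc,
      ← intervalIntegral.integral_of_le (by linarith : b - c ≤ b + c)]
    have : (∫ t in (b - c)..(b + c), g t)
        = ∫ t in (b - c)..(b + c), (c ^ 2 - (t - b) ^ 2) := by
      apply intervalIntegral.integral_congr
      intro t ht
      rw [Set.uIcc_of_le (by linarith : b - c ≤ b + c), Set.mem_Icc] at ht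
      have : 0 ≤ c ^ 2 - (t - b) ^ 2 := by nlinarith [ht.1, ht.2]
      simp [hg, max_eq_left this]
    rw [this]
    have hsub : (∫ t in (b - c)..(b + c), (c ^ 2 - (t - b) ^ 2))
        = (∫ t in (b - c)..(b + c), (c:ℝ) ^ 2) - ∫ t in (b - c)..(b + c), (t - b) ^ 2 := by
      apply intervalIntegral.integral_sub
      · exact intervalIntegrable_const
      · exact (Continuous.intervalIntegrable (by continuity) _ _)
    rw [hsub, intervalIntegral.integral_const]
    have hcomp : (∫ t in (b - c)..(b + c), (t - b) ^ 2)
        = ∫ x in (b - c - b)..(b + c - b), x ^ 2 :=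
      intervalIntegral.integral_comp_sub_right (fun x => x ^ 2) b
    rw [hcomp]
    have : b - c - b = -c := by ring
    rw [this]
    have : b + c - b = c := by ring
    rw [this, integral_pow]
    field_simp [smul_eq_mul]
    ring
  -- g is interval integrable
  have hgii : IntervalIntegrable g volume (-R) R :=
    hgcont.intervalIntegrable _ _
  -- integrability of the pieces
  have hvint : IntervalIntegrable (fun t => (t - b) ^ 2 * η t) volume (-R) R :=
    hint.continuousOn_mul (by fun_prop)
  have hlhsint : IntervalIntegrable (fun t => c ^ 2 * η t - M * g t) volume (-R) R :=
    (hint.const_mul _).sub (hgii.const_mul _)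
  -- pointwise inequality on [-R, R]
  have hpt : ∀ t ∈ Set.Icc (-R) R,
      c ^ 2 * η t - M * g t ≤ (t - b) ^ 2 * η t := by
    intro t ht
    have h1 := hnn t ht
    have h2 := hub t ht
    rcases le_or_gt (c ^ 2 - (t - b) ^ 2) 0 with h | h
    · rw [hg]; simp only [max_eq_right h]
      nlinarith [mul_nonneg h1 (by linarith : (0:ℝ) ≤ (t - b) ^ 2 - c ^ 2)]
    · rw [hg]; simp only [max_eq_left h.le]
      nlinarith [mul_nonneg h.le (sub_nonneg.2 h2)]
  have hmono : (∫ t in (-R)..R, (c ^ 2 * η t - M * g t))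
      ≤ ∫ t in (-R)..R, (t - b) ^ 2 * η t :=
    intervalIntegral.integral_mono_on hRR hlhsint hvint hpt
  -- compute the left side
  have hIg : (∫ t in (-R)..R, g t) ≤ 4 * c ^ 3 / 3 := by
    rw [intervalIntegral.integral_of_le hRR]
    calc (∫ t in Set.Ioc (-R) R, g t) ≤ ∫ t, g t := by
          apply setIntegral_le_integral hgInt
          exact Filter.Eventually.of_forall hgnn
      _ = 4 * c ^ 3 / 3 := hgtotal
  have hsplit : (∫ t in (-R)..R, (c ^ 2 * η t - M * g t))
      = c ^ 2 * (∫ t in (-R)..R, η t) - M * ∫ t in (-R)..R, g t := by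
    rw [intervalIntegral.integral_sub (hint.const_mul _) (hgii.const_mul _),
      intervalIntegral.integral_const_mul, intervalIntegral.integral_const_mul]
  rw [hsplit, hprob] at hmono
  have hfin : 1 / (12 * M ^ 2) ≤ c ^ 2 * 1 - M * ∫ t in (-R)..R, g t := by
    have : c ^ 2 * 1 - M * (4 * c ^ 3 / 3) = 1 / (12 * M ^ 2) := by
      rw [hc]; field_simp; ring
    nlinarith [hIg]
  linarith
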